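/- Let F be a field and M ∈ F with M ≠ 0. Define ψ^M_{t,b} ∈ F² for a tetrahedron t with vertices i<j<k<l and an edge b by: ψ^M_{t,b}=(0,0) if b ⊄ t, and otherwise ψ^M_{t,ij}=(−1,−M⁻¹), ψ^M_{t,ik}=(1−M, M⁻¹), ψ^M_{t,il}=(M,0), ψ^M_{t,jk}=(M,0), ψ^M_{t,jl}=(0,1), ψ^M_{t,kl}=(−M,−1). Let A(M) be the 5×5 matrix over F with rows (0, (M−1)M⁻², M⁻², −M⁻¹, (M−1)M⁻²), (0, M⁻¹, 0, −M⁻¹, M⁻¹), (M⁻¹, (1−M)M⁻², (M−1)M⁻², 0, M⁻²), (M⁻¹, (1−2M)M⁻², (M−1)M⁻², M⁻¹, (1−M)M⁻²), (0, −M⁻¹, M⁻¹, 0, 0). Then for every edge b of the pentachoron 12345, the coloring (x_t,y_t)=ψ^M_{t,b} of its five 3-faces, listed in the order (2345, 1345, 1245, 1235, 1234), satisfies (y_{2345},…,y_{1234})ᵀ = A(M)·(x_{2345},…,x_{1234})ᵀ. Moreover, if −1 ≠ 0 is invertible and M = −1, then A(−1) equals the matrix 𝓡 with rows (0,−2,1,1,−2),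 (0,−1,0,1,−1), (−1,2,−2,0,1), (−1,3,−2,−1,2), (0,1,−1,0,0). -/

import Mathlib

open Finset

/-- The 5×5 integer matrix 𝓡. -/
def Rmat : Matrix (Fin 5) (Fin 5) ℤ :=
  !![0, -2, 1, 1, -2;
     0, -1, 0, 1, -1;
     -1, 2, -2, 0, 1;
     -1, 3, -2, -1, 2;
     0, 1, -1, 0, 0]

/-- The table of 2-columns ψ^M for a tetrahedron with (sorted) vertices indexed by `Fin 4`:
for indices a < c, the value of ψ^M on the edge joining the a-th and the c-th vertex. -/
def psiMPair {F : Type*} [Field F] (M : F) (a c : Fin 4) : F × F :=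
  if a = 0 ∧ c = 1 then (-1, -M⁻¹)
  else if a = 0 ∧ c = 2 then (1 - M, M⁻¹)
  else if a = 0 ∧ c = 3 then (M, 0)
  else if a = 1 ∧ c = 2 then (M, 0)
  else if a = 1 ∧ c = 3 then (0, 1)
  else if a = 2 ∧ c = 3 then (-M, -1)
  else (0, 0)

/-- ψ^M_{t,b} for a tetrahedron `t` (4-element subset of the vertex set) and an edge `b`:
zero when `b ⊄ t`, and the corresponding table value otherwise. -/
def psiM {F : Type*} [Field F] (M : F) {V : Type*} [LinearOrder V]
    (t : Finset V) (ht : t.card = 4) (b : Finset V) : F × F :=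
  ∑ a : Fin 4, ∑ c : Fin 4,
    if a < c ∧ b = {t.orderEmbOfFin ht a, t.orderEmbOfFin ht c} then psiMPair M a c else 0

/-- The coloring assigning ψ^M_{t,b} to every tetrahedron `t`. -/
def XiM {F : Type*} [Field F] (M : F) {V : Type*} [LinearOrder V] (b : Finset V) :
    Finset V → F × F :=
  fun t => if ht : t.card = 4 then psiM M t ht b else 0

/-- The i-th vertex (in increasing order) of a pentachoron `u`. -/
def pentVert {V : Type*} [LinearOrder V] (u : Finset V) (hu : u.card = 5) (i : Fin 5) : V :=
  u.orderEmbOfFin hu i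

/-- The i-th tetrahedral 3-face of a pentachoron `u`: it omits the i-th vertex. -/
def pentFace {V : Type*} [LinearOrder V] (u : Finset V) (hu : u.card = 5) (i : Fin 5) :
    Finset V :=
  u.erase (pentVert u hu i)

/-- The 5×5 matrix A(M). -/
def Amat {F : Type*} [Field F] (M : F) : Matrix (Fin 5) (Fin 5) F :=
  !![0, (M - 1) * M⁻¹ ^ 2, M⁻¹ ^ 2, -M⁻¹, (M - 1) * M⁻¹ ^ 2;
     0, M⁻¹, 0, -M⁻¹, M⁻¹;
     M⁻¹, (1 - M) * M⁻¹ ^ 2, (M - 1) * M⁻¹ ^ 2, 0, M⁻¹ ^ 2;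
     M⁻¹, (1 - 2 * M) * M⁻¹ ^ 2, (M - 1) * M⁻¹ ^ 2, M⁻¹, (1 - M) * M⁻¹ ^ 2;
     0, -M⁻¹, M⁻¹, 0, 0]

lemma card_univ_fin5 : (univ : Finset (Fin 5)).card = 5 := by simp

/-- Auxiliary: the sorted vertices of the face omitting vertex `k`. -/
def faceFun : Fin 5 → Fin 4 → Fin 5 :=
  ![![1,2,3,4], ![0,2,3,4], ![0,1,3,4], ![0,1,2,4], ![0,1,2,3]]

lemma face_emb (k : Fin 5) (h : ((univ : Finset (Fin 5)).erase k).card = 4) (a : Fin 4) :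
    ((univ : Finset (Fin 5)).erase k).orderEmbOfFin h a = faceFun k a := by
  fin_cases k <;>
    exact congrFun (Finset.orderEmbOfFin_unique h (by decide) (by decide)).symm a

lemma pentVert_univ (i : Fin 5) : pentVert (univ : Finset (Fin 5)) card_univ_fin5 i = i :=
  congrFun (Finset.orderEmbOfFin_unique card_univ_fin5
    (fun x => mem_univ (id x)) strictMono_id).symm i

lemma face_card (k : Fin 5) : ((univ : Finset (Fin 5)).erase k).card = 4 := by
  rw [Finset.card_erase_of_mem (mem_univ k)]; rfl

lemma XiM_face {F : Type*} [Field F] (M : F) (b : Finset (Fin 5)) (k : Fin 5) :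
    XiM M b (pentFace (univ : Finset (Fin 5)) card_univ_fin5 k) =
      psiM M ((univ : Finset (Fin 5)).erase k) (face_card k) b := by
  have hface : pentFace (univ : Finset (Fin 5)) card_univ_fin5 k = univ.erase k := by
    ext v; simp [pentFace, pentVert_univ]
  rw [hface, XiM, dif_pos (face_card k)]

set_option maxHeartbeats 4000000 in
/-- for every field F and M ≠ 0, for every edge b of the pentachoron 12345
(vertex set `Fin 5`), the coloring t ↦ ψ^M_{t,b} of its five 3-faces satisfies
y = A(M)·x; moreover, if −1 ≠ 0 (so −1 is invertible) and M = −1, then A(−1) = 𝓡. -/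
theorem statement9 (F : Type*) [Field F] (M : F) (hM : M ≠ 0) :
    (∀ b : Finset (Fin 5), b.card = 2 → ∀ i : Fin 5,
      (XiM M b (pentFace (univ : Finset (Fin 5)) card_univ_fin5 i)).2 =
        ∑ j : Fin 5, Amat M i j *
          (XiM M b (pentFace (univ : Finset (Fin 5)) card_univ_fin5 j)).1) ∧
    ((-1 : F) ≠ 0 → M = -1 → ∀ i j : Fin 5, Amat M i j = (Rmat i j : F)) := by
  constructor
  · intro b hb
    obtain ⟨x, y, hxy, rfl⟩ := Finset.card_eq_two.mp hb
    intro i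
    simp only [XiM_face, psiM, face_emb]
    fin_cases x <;> fin_cases y <;>
      first
        | exact absurd rfl hxy
        | (fin_cases i <;>
            (simp (config := { decide := true }) only [Fin.sum_univ_four, Fin.sum_univ_five,
              if_true, if_false, psiMPair, Amat, faceFun, Matrix.cons_val', Matrix.cons_val_zero,
              Matrix.cons_val_one, Matrix.head_cons, Matrix.empty_val', Matrix.cons_val_fin_one,
              Matrix.head_fin_const, Matrix.cons_val_two, Matrix.cons_val_three,
              Matrix.cons_val_four, Matrix.tail_cons, Prod.fst_add, Prod.snd_add, Prod.fst_zero,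
              Prod.snd_zero, Matrix.of_apply, Fin.isValue, Fin.reduceFinMk, Matrix.cons_val] <;>
            field_simp <;> ring))
  · intro _ hM1
    subst hM1
    intro i j
    fin_cases i <;> fin_cases j <;>
      norm_num [Amat, Rmat]
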